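/- Aligned-hard ε-boundary bound: Under the two-expert family w*(x) = α*(x)β₁* + (1 − α*(x))β₂* with Δβ* := β₁* − β₂* and oracle-aligned two-cell hard partition C_{1/2}(x) = 1{α*(x) ≥ 1/2}, for every ε ∈ (0, 1/2) one has inf_{w ∈ W_{C_{1/2}}} E[‖w*(X) − w(X)‖₂²] ≤ ‖Δβ*‖₂² ( ε² + (1/4) · P(α*(X) ∈ [ε, 1 − ε]) ). In particular the aligned-hard approximation error is small whenever the mass of contexts with ambiguous mixing weight (α*(X) ∈ [ε, 1−ε]) is small. -/

import Mathlib

open MeasureTheory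

/-- The oracle-aligned two-cell hard class `W_{C_{1/2}}`: maps constant on each of
the two cells of the partition `C_{1/2}(x) = 1{αs x ≥ 1/2}`. -/
def alignedHardClass {𝒳 : Type*} (J : ℕ) (αs : 𝒳 → ℝ) :
    Set (𝒳 → EuclideanSpace ℝ (Fin J)) :=
  {w | ∃ b₁ b₂ : EuclideanSpace ℝ (Fin J),
    ∀ x, w x = if (1 : ℝ) / 2 ≤ αs x then b₁ else b₂}

/-- **Aligned-hard ε-boundary bound.** Under the two-expert family, for every
`ε ∈ (0, 1/2)` the oracle-aligned two-cell hard class satisfies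
`inf E[‖wstar X - w X‖²] ≤ ‖β₁ - β₂‖² (ε² + (1/4) P(αs(X) ∈ [ε, 1-ε]))`. -/
theorem aligned_hard_epsilon_boundary_bound
    {J : ℕ} {Ω 𝒳 : Type*} [MeasurableSpace Ω] [MeasurableSpace 𝒳]
    (μ : Measure Ω) [IsProbabilityMeasure μ]
    (X : Ω → 𝒳) (hX : Measurable X)
    (αs : 𝒳 → ℝ) (hαmeas : Measurable αs)
    (hα01 : ∀ x, αs x ∈ Set.Icc (0 : ℝ) 1)
    (β₁ β₂ : EuclideanSpace ℝ (Fin J))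
    (wstar : 𝒳 → EuclideanSpace ℝ (Fin J))
    (hw : ∀ x, wstar x = αs x • β₁ + (1 - αs x) • β₂)
    (ε : ℝ) (hε0 : 0 < ε) (hε : ε < 1 / 2) :
    sInf ((fun w : 𝒳 → EuclideanSpace ℝ (Fin J) =>
        ∫ ω, ‖wstar (X ω) - w (X ω)‖ ^ 2 ∂μ) '' alignedHardClass J αs)
      ≤ ‖β₁ - β₂‖ ^ 2 *
          (ε ^ 2 + (1 / 4) *
            (μ {ω | αs (X ω) ∈ Set.Icc ε (1 - ε)}).toReal) := by
  classical
  set c : ℝ := ‖β₁ - β₂‖ ^ 2 with hc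
  have hc0 : 0 ≤ c := sq_nonneg _
  set w : 𝒳 → EuclideanSpace ℝ (Fin J) :=
    fun x => if (1 : ℝ) / 2 ≤ αs x then β₁ else β₂ with hwdef
  have hwmem : w ∈ alignedHardClass J αs := ⟨β₁, β₂, fun x => rfl⟩
  -- pointwise value of the squared error
  have hkey : ∀ x, ‖wstar x - w x‖ ^ 2
      = (if (1 : ℝ) / 2 ≤ αs x then (1 - αs x) ^ 2 else (αs x) ^ 2) * c := by
    intro x
    rw [hw x]
    by_cases h : (1 : ℝ) / 2 ≤ αs x
    · simp only [hwdef, if_pos h]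
      have hd : αs x • β₁ + (1 - αs x) • β₂ - β₁ = (αs x - 1) • (β₁ - β₂) := by
        module
      rw [hd, norm_smul, Real.norm_eq_abs, mul_pow, sq_abs, hc]
      ring
    · simp only [hwdef, if_neg h]
      have hd : αs x • β₁ + (1 - αs x) • β₂ - β₂ = (αs x) • (β₁ - β₂) := by
        module
      rw [hd, norm_smul, Real.norm_eq_abs, mul_pow, sq_abs, hc]
  -- the boundary set
  set S : Set Ω := {ω | αs (X ω) ∈ Set.Icc ε (1 - ε)} with hS
  have hSmeas : MeasurableSet S := by
    have : S = (αs ∘ X) ⁻¹' Set.Icc ε (1 - ε) := rfl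
    rw [this]
    exact (hαmeas.comp hX) measurableSet_Icc
  -- measurability of the squared error
  have hFmeas : Measurable fun ω => ‖wstar (X ω) - w (X ω)‖ ^ 2 := by
    have : (fun ω => ‖wstar (X ω) - w (X ω)‖ ^ 2)
        = fun ω => (if (1 : ℝ) / 2 ≤ αs (X ω) then (1 - αs (X ω)) ^ 2
            else (αs (X ω)) ^ 2) * c := by
      funext ω; exact hkey (X ω)
    rw [this]
    have hα : Measurable fun ω => αs (X ω) := hαmeas.comp hX
    exact (Measurable.ite (hα measurableSet_Ici)
      (((measurable_const.sub hα)).pow_const 2) (hα.pow_const 2)).mul_const c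
  -- D ≤ 1/4 on [0,1]
  have hD4 : ∀ a : ℝ, 0 ≤ a → a ≤ 1 →
      (if (1 : ℝ) / 2 ≤ a then (1 - a) ^ 2 else a ^ 2) ≤ 1 / 4 := by
    intro a h0 h1
    split_ifs with h
    · nlinarith
    · push_neg at h; nlinarith
  -- pointwise bound
  have hptbd : ∀ ω, ‖wstar (X ω) - w (X ω)‖ ^ 2
      ≤ c * ε ^ 2 + (c / 4) * S.indicator (fun _ => (1 : ℝ)) ω := by
    intro ω
    rw [hkey (X ω)]
    obtain ⟨ha0, ha1⟩ := hα01 (X ω)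
    by_cases hmem : ω ∈ S
    · rw [Set.indicator_of_mem hmem]
      have h1 := mul_le_mul_of_nonneg_right (hD4 (αs (X ω)) ha0 ha1) hc0
      have h2 : 0 ≤ c * ε ^ 2 := mul_nonneg hc0 (sq_nonneg ε)
      linarith
    · rw [Set.indicator_of_notMem hmem]
      have hnot : ¬ (ε ≤ αs (X ω) ∧ αs (X ω) ≤ 1 - ε) := hmem
      push_neg at hnot
      have hDe : (if (1 : ℝ) / 2 ≤ αs (X ω) then (1 - αs (X ω)) ^ 2
          else (αs (X ω)) ^ 2) ≤ ε ^ 2 := by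
        split_ifs with h
        · have h1 : 1 - ε < αs (X ω) := by
            rcases lt_or_ge (αs (X ω)) ε with h2 | h2
            · linarith
            · exact hnot h2
          nlinarith
        · push_neg at h
          have h1 : αs (X ω) < ε := by
            rcases lt_or_ge (αs (X ω)) ε with h2 | h2
            · exact h2
            · have := hnot h2; linarith
          nlinarith
      have h1 := mul_le_mul_of_nonneg_right hDe hc0
      linarith
  -- integrability
  have hFint : Integrable (fun ω => ‖wstar (X ω) - w (X ω)‖ ^ 2) μ := by
    refine (integrable_const c).mono' hFmeas.aestronglyMeasurable
      (Filter.Eventually.of_forall fun ω => ?_)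
    rw [Real.norm_eq_abs, abs_of_nonneg (sq_nonneg _), hkey (X ω)]
    obtain ⟨ha0, ha1⟩ := hα01 (X ω)
    have h1 := mul_le_mul_of_nonneg_right (hD4 (αs (X ω)) ha0 ha1) hc0
    linarith
  have hGint : Integrable
      (fun ω => c * ε ^ 2 + (c / 4) * S.indicator (fun _ => (1 : ℝ)) ω) μ := by
    exact (integrable_const (c * ε ^ 2)).add
      (((integrable_const (1 : ℝ)).indicator hSmeas).const_mul (c / 4))
  -- integral bound
  have hint : (∫ ω, ‖wstar (X ω) - w (X ω)‖ ^ 2 ∂μ)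
      ≤ c * (ε ^ 2 + (1 / 4) * (μ S).toReal) := by
    calc (∫ ω, ‖wstar (X ω) - w (X ω)‖ ^ 2 ∂μ)
        ≤ ∫ ω, (c * ε ^ 2 + (c / 4) * S.indicator (fun _ => (1 : ℝ)) ω) ∂μ :=
          integral_mono hFint hGint hptbd
      _ = c * ε ^ 2 + (c / 4) * (μ S).toReal := by
          rw [integral_add (integrable_const _)
            (((integrable_const (1 : ℝ)).indicator hSmeas).const_mul (c / 4)),
            integral_const, integral_const_mul]
          have : (∫ ω, S.indicator (fun _ => (1 : ℝ)) ω ∂μ) = (μ S).toReal := by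
            rw [integral_indicator hSmeas, integral_const]
            simp [Measure.restrict_apply_univ, Measure.real]
          rw [this]
          simp
      _ = c * (ε ^ 2 + (1 / 4) * (μ S).toReal) := by ring
  -- conclude via sInf
  have hbdd : BddBelow ((fun w : 𝒳 → EuclideanSpace ℝ (Fin J) =>
      ∫ ω, ‖wstar (X ω) - w (X ω)‖ ^ 2 ∂μ) '' alignedHardClass J αs) := by
    refine ⟨0, ?_⟩
    rintro y ⟨w', -, rfl⟩
    exact integral_nonneg fun ω => sq_nonneg _
  have hmem : (∫ ω, ‖wstar (X ω) - w (X ω)‖ ^ 2 ∂μ) ∈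
      ((fun w : 𝒳 → EuclideanSpace ℝ (Fin J) =>
        ∫ ω, ‖wstar (X ω) - w (X ω)‖ ^ 2 ∂μ) '' alignedHardClass J αs) :=
    ⟨w, hwmem, rfl⟩
  exact le_trans (csInf_le hbdd hmem) hint
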